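/- Let $Y$ be a PGF with $y_0 > 0$, $Y'(1) < 1$, analytic on $|z| < R$, $R > 1$, and $t_0 > 1$ as defined. Fix real $w$ with $1 < w < t_0$ and complex $z$ with $|z| < t_0$. Then $\frac{wY(z) - zY(w)}{Y(z) - z} \in (-\infty, 0]$ (as a real number) if and only if $z$ is real with $1 \le z \le w$. -/

import Mathlib

open Set


lemma aux_norm_pow_sub_pow {A : Type*} [NormedCommRing A] [NormOneClass A]
    (ρ : ℝ) (u v : A) (hu : ‖u‖ ≤ ρ) (hv : ‖v‖ ≤ ρ) :
    ∀ k : ℕ, ‖u ^ k - v ^ k‖ ≤ (k : ℝ) * ρ ^ (k - 1) * ‖u - v‖ := by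
  have hρ : 0 ≤ ρ := le_trans (norm_nonneg u) hu
  intro k
  induction k with
  | zero => simp
  | succ n ih =>
    have key : u ^ (n + 1) - v ^ (n + 1) = u ^ n * (u - v) + (u ^ n - v ^ n) * v := by ring
    have h1 : ‖u ^ n * (u - v)‖ ≤ ρ ^ n * ‖u - v‖ := by
      calc ‖u ^ n * (u - v)‖ ≤ ‖u ^ n‖ * ‖u - v‖ := norm_mul_le _ _
        _ ≤ ρ ^ n * ‖u - v‖ := by
            gcongr
            exact le_trans (norm_pow_le u n) (pow_le_pow_left₀ (norm_nonneg u) hu n)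
    have h2 : ‖(u ^ n - v ^ n) * v‖ ≤ ((n : ℝ) * ρ ^ (n - 1) * ‖u - v‖) * ρ := by
      calc ‖(u ^ n - v ^ n) * v‖ ≤ ‖u ^ n - v ^ n‖ * ‖v‖ := norm_mul_le _ _
        _ ≤ ((n : ℝ) * ρ ^ (n - 1) * ‖u - v‖) * ρ := by
            apply mul_le_mul ih hv (norm_nonneg v)
            positivity
    have h3 : ((n : ℝ) * ρ ^ (n - 1) * ‖u - v‖) * ρ ≤ (n : ℝ) * ρ ^ n * ‖u - v‖ := by
      cases n with
      | zero => simp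
      | succ m =>
        rw [Nat.add_sub_cancel, pow_succ]
        exact le_of_eq (by ring)
    calc ‖u ^ (n + 1) - v ^ (n + 1)‖ = ‖u ^ n * (u - v) + (u ^ n - v ^ n) * v‖ := by rw [key]
      _ ≤ ‖u ^ n * (u - v)‖ + ‖(u ^ n - v ^ n) * v‖ := norm_add_le _ _
      _ ≤ ρ ^ n * ‖u - v‖ + (n : ℝ) * ρ ^ n * ‖u - v‖ := by
          apply add_le_add h1 (le_trans h2 h3)
      _ = ((n + 1 : ℕ) : ℝ) * ρ ^ ((n + 1) - 1) * ‖u - v‖ := by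
          rw [Nat.add_sub_cancel]; push_cast; ring


noncomputable def Yc (y : ℕ → ℝ) (z : ℂ) : ℂ := ∑' k : ℕ, (y k : ℂ) * z ^ k
noncomputable def Yr (y : ℕ → ℝ) (t : ℝ) : ℝ := ∑' k : ℕ, y k * t ^ k
noncomputable def Dr (y : ℕ → ℝ) (t : ℝ) : ℝ := ∑' k : ℕ, (k : ℝ) * y k * t ^ (k - 1)

lemma Yc_ofReal (y : ℕ → ℝ) (t : ℝ) : ((Yr y t : ℝ) : ℂ) = Yc y (t : ℂ) := by
  rw [Yr, Yc, Complex.ofReal_tsum]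
  exact tsum_congr fun k => by push_cast; ring

lemma summable_r {y : ℕ → ℝ} {t : ℝ}
    (h : Summable fun k : ℕ => (y k : ℂ) * (t : ℂ) ^ k) :
    Summable fun k : ℕ => y k * t ^ k := by
  rw [← Complex.summable_ofReal]
  exact h.congr fun k => by push_cast; ring

lemma abs_Yc_le {y : ℕ → ℝ} (hy : ∀ k, 0 ≤ y k) {z : ℂ}
    (h : Summable fun k : ℕ => y k * ‖z‖ ^ k) :
    ‖Yc y z‖ ≤ Yr y (‖z‖) := by
  have h' : Summable fun k : ℕ => ‖(y k : ℂ) * z ^ k‖ := by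
    refine h.congr fun k => ?_
    rw [norm_mul, norm_pow, Complex.norm_real, Real.norm_eq_abs,
      abs_of_nonneg (hy k)]
  refine le_trans (norm_tsum_le_tsum_norm h') (le_of_eq ?_)
  refine tsum_congr fun k => ?_
  rw [norm_mul, norm_pow, Complex.norm_real, Real.norm_eq_abs,
    abs_of_nonneg (hy k)]



lemma Yc_lip {y : ℕ → ℝ} (hy : ∀ k, 0 ≤ y k) {ρ : ℝ} {u v : ℂ}
    (hu : ‖u‖ ≤ ρ) (hv : ‖v‖ ≤ ρ)
    (hsu : Summable fun k : ℕ => (y k : ℂ) * u ^ k)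
    (hsv : Summable fun k : ℕ => (y k : ℂ) * v ^ k)
    (hsd : Summable fun k : ℕ => (k : ℝ) * y k * ρ ^ (k - 1)) :
    ‖Yc y u - Yc y v‖ ≤ Dr y ρ * ‖u - v‖ := by
  have hdiff : Yc y u - Yc y v = ∑' k : ℕ, (y k : ℂ) * (u ^ k - v ^ k) := by
    rw [Yc, Yc, ← Summable.tsum_sub hsu hsv]
    exact tsum_congr fun k => by ring
  have hbd : ∀ k : ℕ, ‖(y k : ℂ) * (u ^ k - v ^ k)‖ ≤
      ((k : ℝ) * y k * ρ ^ (k - 1)) * ‖u - v‖ := by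
    intro k
    rw [norm_mul, Complex.norm_real, Real.norm_eq_abs, abs_of_nonneg (hy k)]
    have := aux_norm_pow_sub_pow ρ u v hu hv k
    calc y k * ‖u ^ k - v ^ k‖ ≤ y k * ((k : ℝ) * ρ ^ (k - 1) * ‖u - v‖) := by
          exact mul_le_mul_of_nonneg_left this (hy k)
      _ = ((k : ℝ) * y k * ρ ^ (k - 1)) * ‖u - v‖ := by
          ring
  have hsum2 : Summable fun k : ℕ => ((k : ℝ) * y k * ρ ^ (k - 1)) * ‖u - v‖ :=
    hsd.mul_right _
  have hsum1 : Summable fun k : ℕ => ‖(y k : ℂ) * (u ^ k - v ^ k)‖ :=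
    Summable.of_nonneg_of_le (fun k => norm_nonneg _) hbd hsum2
  calc ‖Yc y u - Yc y v‖ = ‖∑' k : ℕ, (y k : ℂ) * (u ^ k - v ^ k)‖ := by
        rw [hdiff]
    _ ≤ ∑' k : ℕ, ‖(y k : ℂ) * (u ^ k - v ^ k)‖ := norm_tsum_le_tsum_norm hsum1
    _ ≤ ∑' k : ℕ, ((k : ℝ) * y k * ρ ^ (k - 1)) * ‖u - v‖ :=
        Summable.tsum_le_tsum hbd hsum1 hsum2
    _ = Dr y ρ * ‖u - v‖ := tsum_mul_right

lemma summable_kpow {y : ℕ → ℝ} {t : ℝ}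
    (hsd : Summable fun k : ℕ => (k : ℝ) * y k * t ^ (k - 1)) :
    Summable fun k : ℕ => (k : ℝ) * y k * t ^ k := by
  refine (hsd.mul_right t).congr fun k => ?_
  cases k with
  | zero => simp
  | succ n => rw [mul_assoc, mul_assoc, mul_comm, Nat.add_sub_cancel, ← pow_succ]; ring

lemma Dr_mul (y : ℕ → ℝ) (t : ℝ) :
    Dr y t * t = ∑' k : ℕ, (k : ℝ) * y k * t ^ k := by
  rw [Dr, ← tsum_mul_right]
  refine tsum_congr fun k => ?_
  cases k with
  | zero => simp
  | succ n => rw [Nat.add_sub_cancel, mul_assoc, ← pow_succ]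



lemma phi_neg {y : ℕ → ℝ} (hy : ∀ k, 0 ≤ y k) (hy0 : 0 < y 0) {t s : ℝ}
    (ht : 0 < t) (hts : t < s)
    (hsdt : Summable fun k : ℕ => (k : ℝ) * y k * t ^ (k - 1))
    (hsds : Summable fun k : ℕ => (k : ℝ) * y k * s ^ (k - 1))
    (hsrt : Summable fun k : ℕ => y k * t ^ k)
    (hsrs : Summable fun k : ℕ => y k * s ^ k)
    (hphis : Dr y s * s - Yr y s ≤ 0) :
    Dr y t * t - Yr y t < 0 := by
  have hs : 0 < s := ht.trans hts
  -- F r k = (k-1) y_k r^k ; G adds y0 at k=0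
  set F : ℝ → ℕ → ℝ := fun r k => ((k : ℝ) - 1) * y k * r ^ k with hF
  have hsF : ∀ r : ℝ, (Summable fun k : ℕ => (k:ℝ) * y k * r ^ k) →
      (Summable fun k : ℕ => y k * r ^ k) → Summable (F r) := by
    intro r h1 h2
    exact (h1.sub h2).congr fun k => by simp only [hF]; ring
  have hsFt := hsF t (summable_kpow hsdt) hsrt
  have hsFs := hsF s (summable_kpow hsds) hsrs
  have hphiF : ∀ r : ℝ, (Summable fun k : ℕ => (k:ℝ) * y k * r ^ k) →
      (Summable fun k : ℕ => y k * r ^ k) → Dr y r * r - Yr y r = ∑' k, F r k := by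
    intro r h1 h2
    rw [Dr_mul, Yr, ← Summable.tsum_sub h1 h2]
    exact tsum_congr fun k => by simp only [hF]; ring
  set I : ℕ → ℝ := fun k => if k = 0 then y 0 else 0 with hI
  have hsI : Summable I := summable_of_ne_finset_zero (s := {0})
    (fun k hk => by simp only [hI]; rw [if_neg]; simpa using hk)
  have htI : ∑' k, I k = y 0 := by
    simp only [hI]; exact tsum_eq_single 0 (fun k hk => by rw [if_neg hk])
  set G : ℝ → ℕ → ℝ := fun r k => F r k + I k with hG
  have hsGt : Summable (G t) := hsFt.add hsI
  have hsGs : Summable (G s) := hsFs.add hsI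
  have htG : ∀ r : ℝ, Summable (F r) → ∑' k, G r k = (Dr y r * r - Yr y r) + y 0 → True :=
    fun _ _ _ => trivial
  have hGt : ∑' k, G t k = (Dr y t * t - Yr y t) + y 0 := by
    rw [hphiF t (summable_kpow hsdt) hsrt, ← htI]
    exact Summable.tsum_add hsFt hsI
  have hGs : ∑' k, G s k = (Dr y s * s - Yr y s) + y 0 := by
    rw [hphiF s (summable_kpow hsds) hsrs, ← htI]
    exact Summable.tsum_add hsFs hsI
  have hterm : ∀ k, G t k ≤ (t / s) ^ 2 * G s k := by
    intro k
    match k with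
    | 0 => simp [hG, hF, hI]
    | 1 => simp [hG, hF, hI]
    | (n + 2) =>
      have hne : (n + 2 : ℕ) ≠ 0 := by omega
      simp only [hG, hF, hI, if_neg hne, add_zero]
      have hc : (0:ℝ) ≤ (((n + 2 : ℕ) : ℝ) - 1) * y (n + 2) := by
        refine mul_nonneg ?_ (hy _)
        push_cast
        linarith [Nat.cast_nonneg (α := ℝ) n]
      have hpow : t ^ (n + 2) ≤ (t / s) ^ 2 * s ^ (n + 2) := by
        have h1 : (t / s) ^ 2 * s ^ (n + 2) = t ^ 2 * s ^ n := by
          rw [div_pow, pow_add]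
          field_simp
        have h2 : t ^ n ≤ s ^ n := pow_le_pow_left₀ ht.le hts.le n
        calc t ^ (n + 2) = t ^ 2 * t ^ n := by rw [pow_add]; ring
          _ ≤ t ^ 2 * s ^ n := mul_le_mul_of_nonneg_left h2 (by positivity)
          _ = (t / s) ^ 2 * s ^ (n + 2) := h1.symm
      calc (((n + 2 : ℕ) : ℝ) - 1) * y (n + 2) * t ^ (n + 2)
          ≤ (((n + 2 : ℕ) : ℝ) - 1) * y (n + 2) * ((t / s) ^ 2 * s ^ (n + 2)) := by
            exact mul_le_mul_of_nonneg_left hpow hc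
        _ = (t / s) ^ 2 * ((((n + 2 : ℕ) : ℝ) - 1) * y (n + 2) * s ^ (n + 2)) := by ring
  have hmain : ∑' k, G t k ≤ (t / s) ^ 2 * ∑' k, G s k := by
    rw [← tsum_mul_left]
    exact Summable.tsum_le_tsum hterm hsGt (hsGs.mul_left _)
  have hq1 : (t / s) ^ 2 < 1 := by
    have : t / s < 1 := (div_lt_one hs).mpr hts
    exact pow_lt_one₀ (by positivity) this (by norm_num)
  have hq0 : (0:ℝ) ≤ (t / s) ^ 2 := by positivity
  rw [hGt, hGs] at hmain
  nlinarith [hmain, hq1, hq0, hy0, hphis]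

lemma g_strict {y : ℕ → ℝ} (hy : ∀ k, 0 ≤ y k) {s t : ℝ}
    (hs : 0 < s) (hts : s < t)
    (hphit : Dr y t * t - Yr y t < 0)
    (hsdt : Summable fun k : ℕ => (k : ℝ) * y k * t ^ (k - 1))
    (hsrt : Summable fun k : ℕ => y k * t ^ k)
    (hsrs : Summable fun k : ℕ => y k * s ^ k) :
    Yr y t / t < Yr y s / s := by
  have ht : 0 < t := hs.trans hts
  have key : Yr y t - Yr y s ≤ Dr y t * (t - s) := by
    have h1 : Yr y t - Yr y s = ∑' k : ℕ, y k * (t ^ k - s ^ k) := by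
      rw [Yr, Yr, ← Summable.tsum_sub hsrt hsrs]
      exact tsum_congr fun k => by ring
    have hterm : ∀ k : ℕ, y k * (t ^ k - s ^ k) ≤ ((k:ℝ) * y k * t ^ (k-1)) * (t - s) := by
      intro k
      have habs : ‖t ^ k - s ^ k‖ ≤ (k : ℝ) * t ^ (k - 1) * ‖t - s‖ :=
        aux_norm_pow_sub_pow t t s (by rw [Real.norm_eq_abs, abs_of_pos ht])
          (by rw [Real.norm_eq_abs, abs_of_pos hs]; exact hts.le) k
      rw [Real.norm_eq_abs, Real.norm_eq_abs, abs_of_pos (by linarith : (0:ℝ) < t - s)] at habs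
      have h2 : t ^ k - s ^ k ≤ (k : ℝ) * t ^ (k - 1) * (t - s) :=
        le_trans (le_abs_self _) habs
      calc y k * (t ^ k - s ^ k) ≤ y k * ((k : ℝ) * t ^ (k - 1) * (t - s)) :=
            mul_le_mul_of_nonneg_left h2 (hy k)
        _ = ((k:ℝ) * y k * t ^ (k-1)) * (t - s) := by ring
    rw [h1, Dr, ← tsum_mul_right]
    exact Summable.tsum_le_tsum hterm (by
      refine (hsrt.sub hsrs).congr fun k => ?_; ring) (hsdt.mul_right _)
  rw [div_lt_div_iff₀ ht hs]
  nlinarith [mul_le_mul_of_nonneg_right key ht.le,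
    mul_lt_mul_of_pos_right hphit (by linarith : (0:ℝ) < t - s)]

/-- for a PGF `Y` with `y₀ > 0`, `Y'(1) < 1`, `t₀ > 1`,
fixed real `w ∈ (1,t₀)` and complex `|z| < t₀`, the quantity
`(wY(z) - zY(w))/(Y(z) - z)` lies in `(-∞,0]` iff `z` is real with `1 ≤ z ≤ w`. -/
theorem fctl_negative_real_values (y : ℕ → ℝ) (R : ℝ) (hR : 1 < R)
    (hy : ∀ k, 0 ≤ y k) (hy0 : 0 < y 0)
    (hconv : ∀ z : ℂ, ‖z‖ < R → Summable (fun k : ℕ => (y k : ℂ) * z ^ k))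
    (hconv' : ∀ t : ℝ, 0 < t → t < R →
      Summable (fun k : ℕ => (k : ℝ) * y k * t ^ (k - 1)))
    (hY1 : ∑' k : ℕ, y k = 1) (hY'1 : ∑' k : ℕ, (k : ℝ) * y k < 1)
    (t0 : ℝ)
    (ht0 : t0 = sSup {t : ℝ | t ∈ Ioo 0 R ∧
      (∑' k : ℕ, (k : ℝ) * y k * t ^ (k - 1)) * t - (∑' k : ℕ, y k * t ^ k) ≤ 0})
    (ht0gt : 1 < t0)
    (w : ℝ) (hw1 : 1 < w) (hwt0 : w < t0)
    (z : ℂ) (hz : ‖z‖ < t0) :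
    (∃ a : ℝ, a ≤ 0 ∧
        ((w : ℂ) * (∑' k : ℕ, (y k : ℂ) * z ^ k) - z * (∑' k : ℕ, (y k : ℂ) * (w : ℂ) ^ k)) /
          ((∑' k : ℕ, (y k : ℂ) * z ^ k) - z) = (a : ℂ)) ↔
      (∃ x : ℝ, 1 ≤ x ∧ x ≤ w ∧ z = (x : ℂ)) := by
  have h0R : (0:ℝ) < R := lt_trans one_pos hR
  have ht0' : t0 = sSup {t : ℝ | t ∈ Ioo 0 R ∧ Dr y t * t - Yr y t ≤ 0} := ht0
  have hSne : Set.Nonempty {t : ℝ | t ∈ Ioo 0 R ∧ Dr y t * t - Yr y t ≤ 0} := by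
    by_contra h
    rw [Set.not_nonempty_iff_eq_empty] at h
    rw [h, Real.sSup_empty] at ht0'
    linarith
  have ht0R : t0 ≤ R := by
    rw [ht0']
    exact Real.sSup_le (fun x hx => hx.1.2.le) h0R.le
  have ht0pos : (0:ℝ) < t0 := lt_trans one_pos ht0gt
  have hw0 : (0:ℝ) < w := lt_trans one_pos hw1
  have sumc : ∀ u : ℂ, ‖u‖ < t0 → Summable fun k : ℕ => (y k : ℂ) * u ^ k :=
    fun u h => hconv u (h.trans_le ht0R)
  have sumr : ∀ t : ℝ, 0 ≤ t → t < R → Summable fun k : ℕ => y k * t ^ k := by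
    intro t h1 h2
    refine summable_r (hconv (t : ℂ) ?_)
    rwa [Complex.norm_real, Real.norm_eq_abs, abs_of_nonneg h1]
  have sumd : ∀ t : ℝ, 0 < t → t < t0 → Summable fun k : ℕ => (k:ℝ) * y k * t ^ (k-1) :=
    fun t h1 h2 => hconv' t h1 (h2.trans_le ht0R)
  have hphi : ∀ t : ℝ, 0 < t → t < t0 → Dr y t * t - Yr y t < 0 := by
    intro t h1 h2
    have h2' : t < sSup {t : ℝ | t ∈ Ioo 0 R ∧ Dr y t * t - Yr y t ≤ 0} := by rw [← ht0']; exact h2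
    obtain ⟨s, hsS, hts⟩ := exists_lt_of_lt_csSup hSne h2'
    obtain ⟨⟨hs0, hsR⟩, hsphi⟩ := hsS
    exact phi_neg hy hy0 h1 hts (hconv' t h1 (lt_of_lt_of_le h2 ht0R))
      (hconv' s hs0 hsR) (sumr t h1.le (lt_of_lt_of_le h2 ht0R)) (sumr s hs0.le hsR) hsphi
  have hYr1 : Yr y 1 = 1 := by
    rw [Yr]; simpa using hY1
  have hDr1 : Dr y 1 < 1 := by
    rw [Dr]; simpa using hY'1
  have hg : ∀ s t : ℝ, 0 < s → s < t → t < t0 → Yr y t / t < Yr y s / s := by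
    intro s t h1 h2 h3
    exact g_strict hy h1 h2 (hphi t (h1.trans h2) h3) (sumd t (h1.trans h2) h3)
      (sumr t (h1.trans h2).le (lt_of_lt_of_le h3 ht0R)) (sumr s h1.le (by linarith [h3, ht0R] : s < R))
  have hYww : Yr y w < w := by
    have := hg 1 w one_pos hw1 hwt0
    rw [hYr1, div_one] at this
    exact (div_lt_one hw0).mp this
  have hYrpos : ∀ t : ℝ, 0 ≤ t → t < R → 0 < Yr y t := by
    intro t h1 h2
    have hle : y 0 * t ^ 0 ≤ Yr y t :=
      Summable.le_tsum (sumr t h1 h2) 0 (fun j _ => mul_nonneg (hy j) (pow_nonneg h1 j))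
    rw [pow_zero, mul_one] at hle
    linarith
  -- Lipschitz bound on [1,w] for continuity
  have hDw0 : 0 ≤ Dr y w := by
    rw [Dr]
    exact tsum_nonneg fun k =>
      mul_nonneg (mul_nonneg (Nat.cast_nonneg k) (hy k)) (pow_nonneg hw0.le _)
  have hlipR : ∀ a b : ℝ, a ∈ Icc (1:ℝ) w → b ∈ Icc (1:ℝ) w →
      |Yr y a - Yr y b| ≤ Dr y w * |a - b| := by
    intro a b ha hb
    have ha0 : (0:ℝ) ≤ a := le_trans zero_le_one ha.1
    have hb0 : (0:ℝ) ≤ b := le_trans zero_le_one hb.1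
    have haR : ‖(a : ℂ)‖ < R := by
      rw [Complex.norm_real, Real.norm_eq_abs, abs_of_nonneg ha0]; linarith [ha.2, hwt0, ht0R]
    have hbR : ‖(b : ℂ)‖ < R := by
      rw [Complex.norm_real, Real.norm_eq_abs, abs_of_nonneg hb0]; linarith [hb.2, hwt0, ht0R]
    have e1 : ((Yr y a - Yr y b : ℝ) : ℂ) = Yc y a - Yc y b := by
      rw [Complex.ofReal_sub, Yc_ofReal, Yc_ofReal]
    calc |Yr y a - Yr y b| = ‖((Yr y a - Yr y b : ℝ) : ℂ)‖ :=
          by rw [Complex.norm_real, Real.norm_eq_abs]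
      _ = ‖Yc y (a:ℂ) - Yc y (b:ℂ)‖ := by rw [e1]
      _ ≤ Dr y w * ‖(a:ℂ) - (b:ℂ)‖ := by
          refine Yc_lip hy ?_ ?_ (hconv _ haR) (hconv _ hbR) (sumd w hw0 hwt0)
          · rw [Complex.norm_real, Real.norm_eq_abs, abs_of_nonneg ha0]; exact ha.2
          · rw [Complex.norm_real, Real.norm_eq_abs, abs_of_nonneg hb0]; exact hb.2
      _ = Dr y w * |a - b| := by rw [← Complex.ofReal_sub, Complex.norm_real, Real.norm_eq_abs]
  have hcontY : ContinuousOn (Yr y) (Icc 1 w) := by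
    refine LipschitzOnWith.continuousOn (K := (Dr y w).toNNReal) ?_
    rw [lipschitzOnWith_iff_dist_le_mul]
    intro a ha b hb
    rw [Real.dist_eq, Real.dist_eq]
    calc |Yr y a - Yr y b| ≤ Dr y w * |a - b| := hlipR a b ha hb
      _ = ((Dr y w).toNNReal : ℝ) * |a - b| := by rw [Real.coe_toNNReal _ hDw0]
  have hcont : ContinuousOn (fun x => Yr y x / x) (Icc 1 w) := by
    refine hcontY.div (continuousOn_id) (fun x hx => ?_)
    exact ne_of_gt (lt_of_lt_of_le one_pos hx.1)
  have hIVT : ∀ c : ℝ, Yr y w / w ≤ c → c ≤ 1 → ∃ x, 1 ≤ x ∧ x ≤ w ∧ Yr y x / x = c := by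
    intro c h1 h2
    have hsub := intermediate_value_Icc' hw1.le hcont
    have hc : c ∈ Icc (Yr y w / w) (Yr y 1 / 1) := by
      constructor
      · exact h1
      · rw [hYr1, div_one]; exact h2
    obtain ⟨x, hx, hgx⟩ := hsub hc
    exact ⟨x, hx.1, hx.2, hgx⟩
  -- core uniqueness
  have hcore : ∀ c : ℝ, Yr y w / w ≤ c → c ≤ 1 → Yc y z = (c : ℂ) * z →
      ∃ x : ℝ, 1 ≤ x ∧ x ≤ w ∧ z = (x : ℂ) := by
    intro c hc1 hc2 hcz
    have hgwpos : 0 < Yr y w / w := div_pos (hYrpos w hw0.le (by linarith [hwt0, ht0R])) hw0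
    have hcpos : 0 < c := lt_of_lt_of_le hgwpos hc1
    obtain ⟨tc, htc1, htcw, hgtc⟩ := hIVT c hc1 hc2
    have htc0 : (0:ℝ) < tc := lt_of_lt_of_le one_pos htc1
    have htclt : tc < t0 := lt_of_le_of_lt htcw hwt0
    have hYtc : Yr y tc = c * tc := by
      rw [div_eq_iff (ne_of_gt htc0)] at hgtc; exact hgtc
    have hDtc : Dr y tc < c := by
      have h := hphi tc htc0 htclt
      rw [hYtc] at h
      nlinarith [htc0]
    have hz0 : z ≠ 0 := by
      intro h
      have hYc0 : Yc y 0 = ((y 0 : ℝ) : ℂ) := by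
        rw [Yc]
        rw [tsum_eq_single 0 (fun k hk => by rw [zero_pow hk, mul_zero])]
        simp
      rw [h, hYc0, mul_zero] at hcz
      exact absurd (Complex.ofReal_eq_zero.mp hcz) (ne_of_gt hy0)
    have hrpos : 0 < ‖z‖ := by
      simpa [AbsoluteValue.pos_iff] using (norm_pos_iff.mpr hz0)
    have habsle : ‖Yc y z‖ ≤ Yr y (‖z‖) :=
      abs_Yc_le hy (sumr _ (norm_nonneg z) (lt_of_lt_of_le hz ht0R))
    have hrle : ‖z‖ ≤ tc := by
      by_contra h
      push_neg at h
      have hgz := hg tc (‖z‖) htc0 h hz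
      rw [hgtc] at hgz
      have h2 : Yr y (‖z‖) < c * ‖z‖ := by
        rw [div_lt_iff₀ hrpos] at hgz; linarith
      have h3 : ‖Yc y z‖ = c * ‖z‖ := by
        rw [hcz, norm_mul, Complex.norm_real, Real.norm_eq_abs, abs_of_pos hcpos]
      linarith
    have habstc : ‖((tc : ℝ) : ℂ)‖ ≤ tc := by
      rw [Complex.norm_real, Real.norm_eq_abs, abs_of_pos htc0]
    have hlip := Yc_lip hy hrle habstc (sumc z hz)
      (sumc ((tc:ℝ):ℂ) (by rw [Complex.norm_real, Real.norm_eq_abs, abs_of_pos htc0]; exact htclt))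
      (sumd tc htc0 htclt)
    have hYctc : Yc y ((tc : ℝ) : ℂ) = (c : ℂ) * ((tc : ℝ) : ℂ) := by
      rw [← Yc_ofReal, hYtc]; push_cast; ring
    rw [hcz, hYctc, ← mul_sub, norm_mul, Complex.norm_real, Real.norm_eq_abs, abs_of_pos hcpos] at hlip
    have habs0 : ‖z - ((tc:ℝ):ℂ)‖ = 0 := by
      nlinarith [norm_nonneg (z - ((tc:ℝ):ℂ)), hDtc, hlip]
    have hz_eq : z = ((tc : ℝ) : ℂ) := by
      rw [← sub_eq_zero]
      exact norm_eq_zero.mp habs0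
    exact ⟨tc, htc1, htcw, hz_eq⟩
  constructor
  · rintro ⟨a, ha, heq⟩
    have heq' : ((w:ℂ) * Yc y z - z * ((Yr y w : ℝ) : ℂ)) / (Yc y z - z) = (a : ℂ) := by
      rw [Yc_ofReal]; exact heq
    by_cases hden : Yc y z - z = 0
    · refine hcore 1 ((div_lt_one hw0).mpr hYww).le le_rfl ?_
      rw [sub_eq_zero] at hden
      rw [hden]; norm_num
    · have h2 : (w:ℂ) * Yc y z - z * ((Yr y w : ℝ):ℂ) = (a:ℂ) * (Yc y z - z) :=
        (div_eq_iff hden).mp heq'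
      have hwa : (0:ℝ) < w - a := by linarith
      have hwaC : ((w - a : ℝ) : ℂ) ≠ 0 := Complex.ofReal_ne_zero.mpr (ne_of_gt hwa)
      have hYcz : Yc y z = (((Yr y w - a) / (w - a) : ℝ) : ℂ) * z := by
        push_cast
        rw [div_mul_eq_mul_div, eq_div_iff (by push_cast at hwaC ⊢; exact hwaC)]
        linear_combination h2
      have hcw : Yr y w / w ≤ (Yr y w - a) / (w - a) := by
        rw [div_le_div_iff₀ hw0 hwa]
        nlinarith [hYww, ha, hw0]
      have hc1 : (Yr y w - a) / (w - a) ≤ 1 := by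
        rw [div_le_one hwa]; linarith
      exact hcore _ hcw hc1 hYcz
  · rintro ⟨x, hx1, hxw, rfl⟩
    have hx0 : (0:ℝ) < x := lt_of_lt_of_le one_pos hx1
    have hxt0 : x < t0 := lt_of_le_of_lt hxw hwt0
    have hden : Yr y x - x ≤ 0 := by
      rcases eq_or_lt_of_le hx1 with h | h
      · rw [← h, hYr1]; norm_num
      · have hgx := hg 1 x one_pos h hxt0
        rw [hYr1, div_one] at hgx
        have := (div_lt_one hx0).mp hgx
        linarith
    have hnum : 0 ≤ w * Yr y x - x * Yr y w := by
      rcases eq_or_lt_of_le hxw with h | h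
      · rw [h, mul_comm]; simp
      · have hgx := hg x w hx0 h hwt0
        rw [div_lt_div_iff₀ hw0 hx0] at hgx
        linarith
    refine ⟨(w * Yr y x - x * Yr y w) / (Yr y x - x),
      div_nonpos_of_nonneg_of_nonpos hnum hden, ?_⟩
    rw [show (∑' k : ℕ, (y k : ℂ) * (x:ℂ) ^ k) = ((Yr y x : ℝ) : ℂ) from (Yc_ofReal y x).symm,
      show (∑' k : ℕ, (y k : ℂ) * (w:ℂ) ^ k) = ((Yr y w : ℝ) : ℂ) from (Yc_ofReal y w).symm]
    push_cast
    ring
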